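/- Let K*/K be a field extension and L/K* a finite extension such that the tensor product K** ⊗_{K*} L is not an integral domain for some extension K** of K*. Then there exists a maximal ideal m of a polynomial ring K*[X_1,...,X_n] with K*[X_1,...,X_n]/m ≅ L such that the extension of m to K**[X_1,...,X_n] is not a maximal ideal. -/
import Mathlib


open TensorProduct

/-- If `L/K'` is a finite extension and `K'' ⊗[K'] L` is not an integral domain for some
extension `K''/K'`, then there is a maximal ideal `m` of a polynomial ring over `K'` with
quotient isomorphic to `L` whose extension to `K''[X]` is not maximal. -/
theorem stmt_0 (K' K'' L : Type) [Field K'] [Field K''] [Field L]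
    [Algebra K' K''] [Algebra K' L] [FiniteDimensional K' L]
    (h : ¬ IsDomain (K'' ⊗[K'] L)) :
    ∃ (n : ℕ) (m : Ideal (MvPolynomial (Fin n) K')), m.IsMaximal ∧
      Nonempty ((MvPolynomial (Fin n) K' ⧸ m) ≃ₐ[K'] L) ∧
      ¬ (m.map (MvPolynomial.map (algebraMap K' K''))).IsMaximal := by
  have hft : Algebra.FiniteType K' L := inferInstance
  obtain ⟨n, f, hf⟩ := Algebra.FiniteType.iff_quotient_mvPolynomial''.mp hft
  refine ⟨n, RingHom.ker f, RingHom.ker_isMaximal_of_surjective f hf,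
    ⟨Ideal.quotientKerAlgEquivOfSurjective hf⟩, ?_⟩
  intro hM
  apply h
  -- base change map
  set g : K'' ⊗[K'] MvPolynomial (Fin n) K' →ₐ[K'] K'' ⊗[K'] L :=
    Algebra.TensorProduct.map (AlgHom.id K' K'') f with hg
  have hker : RingHom.ker g =
      (RingHom.ker f).map (Algebra.TensorProduct.includeRight :
        MvPolynomial (Fin n) K' →ₐ[K'] K'' ⊗[K'] MvPolynomial (Fin n) K') :=
    Algebra.TensorProduct.lTensor_ker f hf
  set e : K'' ⊗[K'] MvPolynomial (Fin n) K' ≃ₐ[K''] MvPolynomial (Fin n) K'' :=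
    MvPolynomial.algebraTensorAlgEquiv K' K'' with he
  set G : MvPolynomial (Fin n) K'' →+* K'' ⊗[K'] L :=
    g.toRingHom.comp (e.symm : MvPolynomial (Fin n) K'' ≃+* _).toRingHom with hG
  have hgsurj : Function.Surjective g := by
    intro x
    induction x using TensorProduct.induction_on with
    | zero => exact ⟨0, map_zero _⟩
    | tmul a b =>
      obtain ⟨p, hp⟩ := hf b
      exact ⟨a ⊗ₜ p, by simp [hg, hp]⟩
    | add x y hx hy =>
      obtain ⟨px, hpx⟩ := hx
      obtain ⟨py, hpy⟩ := hy
      exact ⟨px + py, by simp [hpx, hpy]⟩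
  have hGsurj : Function.Surjective G := by
    intro x
    obtain ⟨y, hy⟩ := hgsurj x
    refine ⟨e y, ?_⟩
    show g (e.symm (e y)) = x
    rw [AlgEquiv.symm_apply_apply]
    exact hy
  have hcomp : (e : K'' ⊗[K'] MvPolynomial (Fin n) K' ≃+* _).toRingHom.comp
      (Algebra.TensorProduct.includeRight :
        MvPolynomial (Fin n) K' →ₐ[K'] K'' ⊗[K'] MvPolynomial (Fin n) K').toRingHom =
      MvPolynomial.map (algebraMap K' K'') := by
    refine RingHom.ext fun p => ?_
    simp [he]
  have hkerG : RingHom.ker G = (RingHom.ker f).map (MvPolynomial.map (algebraMap K' K'')) := by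
    have h1 : RingHom.ker G = Ideal.comap ((e : K'' ⊗[K'] MvPolynomial (Fin n) K' ≃+* _).symm)
        (RingHom.ker g) := by
      rw [hG, ← RingHom.comap_ker]
      rfl
    rw [h1, Ideal.comap_symm, hker]
    rw [show Ideal.map ((e : K'' ⊗[K'] MvPolynomial (Fin n) K' ≃+* MvPolynomial (Fin n) K''))
        (Ideal.map (Algebra.TensorProduct.includeRight :
          MvPolynomial (Fin n) K' →ₐ[K'] K'' ⊗[K'] MvPolynomial (Fin n) K') (RingHom.ker f)) =
        Ideal.map ((e : K'' ⊗[K'] MvPolynomial (Fin n) K' ≃+* MvPolynomial (Fin n) K'') :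
          K'' ⊗[K'] MvPolynomial (Fin n) K' →+* MvPolynomial (Fin n) K'')
        (Ideal.map (Algebra.TensorProduct.includeRight :
          MvPolynomial (Fin n) K' →ₐ[K'] K'' ⊗[K'] MvPolynomial (Fin n) K').toRingHom
          (RingHom.ker f)) from rfl, Ideal.map_map]
    congr 1
  rw [← hkerG] at hM
  haveI := hM
  letI : Field (MvPolynomial (Fin n) K'' ⧸ RingHom.ker G) := Ideal.Quotient.field _
  exact MulEquiv.isDomain _ (RingHom.quotientKerEquivOfSurjective hGsurj).symm.toMulEquiv
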